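/- Let G be a weighted graph on a finite vertex set V with Laplacian L, let T be a nonempty proper subset of V with complement S = V ∖ T, and assume L_{SS} is positive definite. Then the Schur complement SC(L,T) is again a weighted graph Laplacian on T: it is symmetric, its off-diagonal entries are nonpositive, each of its rows sums to zero (SC(L,T)·𝟙 = 0, where 𝟙 is the all-ones vector on T), and it is positive semidefinite. -/

import Mathlib

open Matrix

variable {V : Type*}

/-- The Laplacian of a weighted graph. -/
noncomputable def lap [Fintype V] [DecidableEq V] (w : V → V → ℝ) : Matrix V V ℝ :=
  Matrix.of fun u v => if u = v then ∑ z, w u z else - w u v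

/-- The block of a matrix with rows selected by `P` and columns selected by `Q`. -/
def blk (M : Matrix V V ℝ) (P Q : V → Prop) : Matrix {v // P v} {v // Q v} ℝ :=
  Matrix.of fun a b => M a.1 b.1

/-- The Schur complement of `M` onto `T`. -/
noncomputable def SC [Fintype V] [DecidableEq V] (M : Matrix V V ℝ) (T : Set V)
    [DecidablePred (· ∈ T)] : Matrix {v // v ∈ T} {v // v ∈ T} ℝ :=
  blk M (· ∈ T) (· ∈ T) -
    blk M (· ∈ T) (fun v => v ∉ T) * (blk M (fun v => v ∉ T) (fun v => v ∉ T))⁻¹ *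
      blk M (fun v => v ∉ T) (· ∈ T)

/-- The inverse of a positive definite real matrix with nonpositive off-diagonal entries
is entrywise nonnegative. -/
lemma stieltjes_inv_nonneg {n : Type*} [Fintype n] [DecidableEq n] {A : Matrix n n ℝ}
    (hA : A.PosDef) (hoff : ∀ i j, i ≠ j → A i j ≤ 0) : ∀ i j, 0 ≤ A⁻¹ i j := by
  intro i j
  set x : n → ℝ := A⁻¹ *ᵥ Pi.single j 1 with hx
  have hAx : A *ᵥ x = Pi.single j 1 := by
    rw [hx, mulVec_mulVec, Matrix.mul_nonsing_inv _ (isUnit_iff_isUnit_det _ |>.1 hA.isUnit),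
      one_mulVec]
  set y : n → ℝ := fun k => max (-x k) 0 with hy
  set p : n → ℝ := fun k => max (x k) 0 with hp
  have hyp : y = p - x := by
    funext k
    simp only [hy, hp, Pi.sub_apply]
    rcases le_total (x k) 0 with h | h
    · rw [max_eq_left (by linarith), max_eq_right h]; ring
    · rw [max_eq_right (by linarith), max_eq_left h]; ring
  have hy0 : ∀ k, 0 ≤ y k := fun k => le_max_right _ _
  have hp0 : ∀ k, 0 ≤ p k := fun k => le_max_right _ _
  have hyp0 : ∀ k, y k * p k = 0 := by
    intro k
    rcases le_total (x k) 0 with h | h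
    · simp [hy, hp, max_eq_right h]
    · simp [hy, hp, max_eq_right (neg_nonpos_of_nonneg h)]
  have h2 : y ⬝ᵥ (A *ᵥ x) = y j := by
    rw [hAx, dotProduct_single, mul_one]
  have h3 : y ⬝ᵥ (A *ᵥ p) ≤ 0 := by
    rw [dotProduct]
    apply Finset.sum_nonpos
    intro i _
    rw [mulVec, dotProduct, Finset.mul_sum]
    apply Finset.sum_nonpos
    intro k _
    by_cases h : i = k
    · subst h
      have : y i * (A i i * p i) = A i i * (y i * p i) := by ring
      rw [this, hyp0 i, mul_zero]
    · exact mul_nonpos_of_nonneg_of_nonpos (hy0 i)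
        (mul_nonpos_of_nonpos_of_nonneg (hoff i k h) (hp0 k))
  have hquad : y ⬝ᵥ (A *ᵥ y) ≤ 0 := by
    have h1 : y ⬝ᵥ (A *ᵥ y) = y ⬝ᵥ (A *ᵥ p) - y ⬝ᵥ (A *ᵥ x) := by
      rw [hyp, mulVec_sub, dotProduct_sub]
    rw [h1, h2]
    have := hy0 j
    linarith
  have hy_zero : y = 0 := by
    by_contra hne
    have := (posDef_iff_dotProduct_mulVec.mp hA).2 hne
    rw [star_trivial] at this
    linarith
  have hxi : 0 ≤ x i := by
    have : y i = 0 := congrFun hy_zero i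
    simp only [hy] at this
    by_contra h
    push_neg at h
    rw [max_eq_left (by linarith)] at this
    linarith
  have : x i = A⁻¹ i j := by
    simp [hx, mulVec, dotProduct_single]
  rwa [this] at hxi

section LapLemmas
variable [Fintype V] [DecidableEq V] (w : V → V → ℝ)

lemma lap_apply (u v : V) : lap w u v = if u = v then ∑ z, w u z else - w u v := rfl

lemma lap_eq (hw_diag : ∀ u, w u u = 0) (u v : V) :
    lap w u v = (if u = v then ∑ z, w u z else 0) - w u v := by
  rw [lap_apply]
  by_cases h : u = v
  · subst h; simp [hw_diag u]
  · simp [h]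

lemma lap_rowsum (hw_diag : ∀ u, w u u = 0) (u : V) : ∑ v, lap w u v = 0 := by
  simp [lap_eq w hw_diag, Finset.sum_sub_distrib, Finset.sum_ite_eq, hw_diag]

lemma lap_symm (hw_symm : ∀ u v, w u v = w v u) (u v : V) : lap w u v = lap w v u := by
  rw [lap_apply, lap_apply]
  by_cases h : u = v
  · subst h; rfl
  · simp [h, Ne.symm h, hw_symm u v]

lemma lap_quad (hw_symm : ∀ u v, w u v = w v u) (hw_diag : ∀ u, w u u = 0) (x : V → ℝ) :
    x ⬝ᵥ (lap w *ᵥ x) = (∑ u, ∑ v, w u v * (x u - x v) ^ 2) / 2 := by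
  have expand : ∀ u v, w u v * (x u - x v) ^ 2
      = w u v * x u ^ 2 + w u v * x v ^ 2 - 2 * (w u v * (x u * x v)) := by
    intro u v; ring
  have hswap : ∑ u, ∑ v, w u v * x v ^ 2 = ∑ u, ∑ v, w u v * x u ^ 2 := by
    rw [Finset.sum_comm]
    exact Finset.sum_congr rfl fun v _ => Finset.sum_congr rfl fun u _ => by rw [hw_symm]
  have inner : ∀ u, (lap w *ᵥ x) u = (∑ z, w u z) * x u - ∑ v, w u v * x v := by
    intro u
    rw [mulVec, dotProduct]
    simp_rw [lap_eq w hw_diag, sub_mul]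
    rw [Finset.sum_sub_distrib]
    congr 1
    simp [ite_mul, Finset.sum_ite_eq]
  have per_u : ∀ u, x u * (lap w *ᵥ x) u
      = ∑ v, w u v * x u ^ 2 - ∑ v, w u v * (x u * x v) := by
    intro u
    rw [inner u, mul_sub]
    congr 1
    · rw [Finset.sum_mul, Finset.mul_sum]
      exact Finset.sum_congr rfl fun v _ => by ring
    · rw [Finset.mul_sum]
      exact Finset.sum_congr rfl fun v _ => by ring
  have lhs : x ⬝ᵥ (lap w *ᵥ x)
      = ∑ u, ∑ v, w u v * x u ^ 2 - ∑ u, ∑ v, w u v * (x u * x v) := by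
    rw [dotProduct]
    simp_rw [per_u]
    rw [Finset.sum_sub_distrib]
  simp_rw [expand, Finset.sum_sub_distrib, Finset.sum_add_distrib, ← Finset.mul_sum]
  rw [hswap, lhs]
  ring

lemma lap_posSemidef (hw_symm : ∀ u v, w u v = w v u) (hw_nonneg : ∀ u v, 0 ≤ w u v)
    (hw_diag : ∀ u, w u u = 0) : (lap w).PosSemidef := by
  refine posSemidef_iff_dotProduct_mulVec.mpr ⟨?_, ?_⟩
  · ext u v
    simp only [conjTranspose_apply, star_trivial, transpose_apply]
    exact lap_symm w hw_symm v u
  · intro x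
    rw [star_trivial, lap_quad w hw_symm hw_diag]
    apply div_nonneg _ (by norm_num)
    refine Finset.sum_nonneg fun u _ => Finset.sum_nonneg fun v _ => ?_
    exact mul_nonneg (hw_nonneg u v) (sq_nonneg _)

end LapLemmas

lemma blk_transpose (M : Matrix V V ℝ) (hM : ∀ u v, M u v = M v u) (P Q : V → Prop) :
    (blk M P Q)ᵀ = blk M Q P := by
  ext a b
  exact hM b.1 a.1

theorem schur_complement_is_laplacian [Fintype V] [DecidableEq V]
    (w : V → V → ℝ) (hw_symm : ∀ u v, w u v = w v u) (hw_nonneg : ∀ u v, 0 ≤ w u v)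
    (hw_diag : ∀ u, w u u = 0)
    (T : Set V) [DecidablePred (· ∈ T)] (hT_ne : T.Nonempty) (hT_proper : T ≠ Set.univ)
    (hSS : (blk (lap w) (fun v => v ∉ T) (fun v => v ∉ T)).PosDef) :
    (SC (lap w) T).IsSymm ∧
    (∀ u v : {v // v ∈ T}, u ≠ v → SC (lap w) T u v ≤ 0) ∧
    (SC (lap w) T).mulVec (fun _ => 1) = 0 ∧
    (SC (lap w) T).PosSemidef := by
  set L := lap w with hL
  have hLsymm : ∀ u v, L u v = L v u := lap_symm w hw_symm
  have hoffV : ∀ u v : V, u ≠ v → L u v ≤ 0 := by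
    intro u v h
    rw [hL, lap_apply, if_neg h]
    linarith [hw_nonneg u v]
  set A := blk L (· ∈ T) (· ∈ T) with hA
  set B := blk L (· ∈ T) (fun v => v ∉ T) with hB
  set C := blk L (fun v => v ∉ T) (· ∈ T) with hC
  set D := blk L (fun v => v ∉ T) (fun v => v ∉ T) with hD
  have hSC : SC L T = A - B * D⁻¹ * C := rfl
  have hAt : Aᵀ = A := blk_transpose L hLsymm _ _
  have hBt : Bᵀ = C := blk_transpose L hLsymm _ _
  have hCt : Cᵀ = B := blk_transpose L hLsymm _ _
  have hDt : Dᵀ = D := blk_transpose L hLsymm _ _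
  have hDdet : IsUnit D.det := isUnit_iff_isUnit_det _ |>.1 hSS.isUnit
  -- off diagonal entries of D are nonpositive
  have hDoff : ∀ a b : {v // v ∉ T}, a ≠ b → D a b ≤ 0 := by
    intro a b h
    exact hoffV a.1 b.1 (fun hh => h (Subtype.ext hh))
  have hDinv : ∀ a b, 0 ≤ D⁻¹ a b := stieltjes_inv_nonneg hSS hDoff
  have hBle : ∀ (u : {v // v ∈ T}) (a : {v // v ∉ T}), B u a ≤ 0 := by
    intro u a
    exact hoffV u.1 a.1 (fun hh => a.2 (hh ▸ u.2))
  have hCle : ∀ (a : {v // v ∉ T}) (u : {v // v ∈ T}), C a u ≤ 0 := by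
    intro a u
    exact hoffV a.1 u.1 (fun hh => a.2 (by rw [hh]; exact u.2))
  refine ⟨?_, ?_, ?_, ?_⟩
  -- symmetry
  · show (SC L T)ᵀ = SC L T
    rw [hSC, transpose_sub, transpose_mul, transpose_mul, transpose_nonsing_inv,
      hAt, hBt, hCt, hDt]
    rw [Matrix.mul_assoc]
  -- off-diagonal nonpositivity
  · intro u v huv
    rw [hSC, Matrix.sub_apply]
    have h1 : A u v ≤ 0 := hoffV u.1 v.1 (fun hh => huv (Subtype.ext hh))
    have h2 : 0 ≤ (B * D⁻¹ * C) u v := by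
      rw [mul_apply]
      refine Finset.sum_nonneg fun b _ => ?_
      rw [← neg_mul_neg]
      refine mul_nonneg (neg_nonneg.2 ?_) (neg_nonneg.2 (hCle b v))
      rw [mul_apply]
      refine Finset.sum_nonpos fun a _ => ?_
      exact mul_nonpos_of_nonpos_of_nonneg (hBle u a) (hDinv a b)
    linarith
  -- row sums
  · have hsplit : ∀ u : V, (∑ v : {v // v ∈ T}, L u v.1) + ∑ v : {v // v ∉ T}, L u v.1 = 0 := by
      intro u
      rw [Fintype.sum_subtype_add_sum_subtype (· ∈ T) (fun v => L u v)]
      exact lap_rowsum w hw_diag u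
    have hone : D *ᵥ (fun _ => (-1 : ℝ)) = C *ᵥ (fun _ => 1) := by
      funext a
      simp only [mulVec, dotProduct, mul_neg_one, mul_one]
      have := hsplit a.1
      have hsum : ∑ b : {v // v ∉ T}, D a b = ∑ v : {v // v ∉ T}, L a.1 v.1 := rfl
      have hsum2 : ∑ u : {v // v ∈ T}, C a u = ∑ v : {v // v ∈ T}, L a.1 v.1 := rfl
      rw [Finset.sum_neg_distrib, hsum, hsum2]
      linarith
    have hinv : D⁻¹ *ᵥ (C *ᵥ (fun _ => (1 : ℝ))) = fun _ => (-1 : ℝ) := by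
      rw [← hone, mulVec_mulVec, nonsing_inv_mul _ hDdet, one_mulVec]
    show (A - B * D⁻¹ * C) *ᵥ (fun _ => 1) = 0
    rw [sub_mulVec, Matrix.mul_assoc, ← mulVec_mulVec, ← mulVec_mulVec, hinv]
    funext u
    simp only [Pi.sub_apply, Pi.zero_apply, mulVec, dotProduct, mul_one, mul_neg_one]
    have := hsplit u.1
    rw [Finset.sum_neg_distrib]
    have hsum : ∑ v : {v // v ∈ T}, A u v = ∑ v : {v // v ∈ T}, L u.1 v.1 := rfl
    have hsum2 : ∑ a : {v // v ∉ T}, B u a = ∑ v : {v // v ∉ T}, L u.1 v.1 := rfl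
    rw [hsum, hsum2]
    linarith
  -- positive semidefiniteness
  · have hLpsd : L.PosSemidef := lap_posSemidef w hw_symm hw_nonneg hw_diag
    set g : {v // v ∈ T} ⊕ {v // v ∉ T} → V := Sum.elim Subtype.val Subtype.val with hg
    have hN : (L.submatrix g g).PosSemidef := hLpsd.submatrix g
    have hblocks : L.submatrix g g = fromBlocks A B C D := by
      ext (i | i) (j | j) <;> rfl
    have hCB : C = Bᴴ := by
      ext a b
      simp only [conjTranspose_apply, star_trivial]
      exact hLsymm a.1 b.1
    rw [hblocks, hCB] at hN
    have := hSS.isUnit.invertible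
    have hres := (Matrix.PosDef.fromBlocks₂₂ A B hSS).mp hN
    rw [← hCB] at hres
    rw [hSC]
    exact hres
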